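/- Let $c\ge 0$ and $k\ge 1$ be integers and let $T\subseteq [c]\mathbin{\dot\cup}[k]$ with $T\cap[k]\ne\emptyset$. Then: (1) the number of pseudosubpartitions of $T$ intersecting $[k]$ non-trivially is at most $2^{|T\cap[k]|\,|T\cap[c]|}(|T\cap[k]|+1)^{|T\cap[k]|}$; and (2) the number of such pseudosubpartitions with exactly $l$ blocks is at most $\frac{2^{l|T\cap[c]|}(l+1)^{|T\cap[k]|}}{l!}$. -/

import Mathlib

open Finset

/-- `P` is a pseudosubpartition of `T ⊆ [c] ⊔ [k]` intersecting `[k]`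
non-trivially: every block is a subset of `T` meeting `[k]` (the `Sum.inr`
part), and distinct blocks have disjoint `[k]`-parts. -/
def IsPseudo {c k : ℕ} (T : Finset (Fin c ⊕ Fin k))
    (P : Finset (Finset (Fin c ⊕ Fin k))) : Prop :=
  (∀ S ∈ P, S ⊆ T ∧ ∃ s ∈ S, s.isRight = true) ∧
  ∀ S ∈ P, ∀ S' ∈ P, S ≠ S' → ∀ s, s ∈ S → s ∈ S' → s.isRight = false

namespace PseudoAux

noncomputable def pick {α : Type*} (S : Finset α) : Option α :=
  if h : S.Nonempty then some h.choose else none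

lemma pick_mem {α : Type*} {S : Finset α} {a : α} (h : pick S = some a) : a ∈ S := by
  unfold pick at h
  split at h
  · next hne =>
      obtain rfl : hne.choose = a := by injection h
      exact hne.choose_spec
  · exact absurd h (by simp)

lemma pick_some {α : Type*} {S : Finset α} (h : S.Nonempty) : ∃ a ∈ S, pick S = some a :=
  ⟨h.choose, h.choose_spec, by rw [pick, dif_pos h]⟩

variable {c k : ℕ} {T : Finset (Fin c ⊕ Fin k)} {P P' : Finset (Finset (Fin c ⊕ Fin k))}

lemma block_unique (hP : IsPseudo T P) {S S' : Finset (Fin c ⊕ Fin k)}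
    (hS : S ∈ P) (hS' : S' ∈ P) {x : Fin c ⊕ Fin k} (hx : x.isRight = true)
    (h1 : x ∈ S) (h2 : x ∈ S') : S = S' := by
  by_contra hne
  have h := hP.2 S hS S' hS' hne x h1 h2
  simp [hx] at h

noncomputable def blockOf (P : Finset (Finset (Fin c ⊕ Fin k))) (x : Fin c ⊕ Fin k) :
    Option (Finset (Fin c ⊕ Fin k)) :=
  pick (P.filter (fun S => x ∈ S))

lemma blockOf_mem {x : Fin c ⊕ Fin k} {S : Finset (Fin c ⊕ Fin k)}
    (h : blockOf P x = some S) : S ∈ P ∧ x ∈ S := by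
  have := pick_mem h
  simpa using mem_filter.mp this

lemma blockOf_eq (hP : IsPseudo T P) {S : Finset (Fin c ⊕ Fin k)} (hS : S ∈ P)
    {x : Fin c ⊕ Fin k} (hx : x.isRight = true) (hxS : x ∈ S) : blockOf P x = some S := by
  obtain ⟨a, ha, hpa⟩ := pick_some (⟨S, mem_filter.mpr ⟨hS, hxS⟩⟩ :
      (P.filter (fun S => x ∈ S)).Nonempty)
  rw [mem_filter] at ha
  rw [blockOf, hpa, block_unique hP ha.1 hS hx ha.2 hxS]

lemma filter_decomp (S : Finset (Fin c ⊕ Fin k)) :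
    S.filter (fun s => s.isRight = true) ∪ S.filter (fun s => s.isLeft = true) = S := by
  ext s
  rcases s with a | b <;> simp

lemma subtype_inj {α : Type*} [DecidableEq α] {p : α → Prop} [DecidablePred p]
    {s t : Finset α} (hs : ∀ x ∈ s, p x) (ht : ∀ x ∈ t, p x)
    (h : s.subtype p = t.subtype p) : s = t := by
  have h2 := congrArg (Finset.map (Function.Embedding.subtype p)) h
  rwa [subtype_map, subtype_map, filter_true_of_mem hs, filter_true_of_mem ht] at h2

/-- The encoding map for part (1). -/
noncomputable def phi (T : Finset (Fin c ⊕ Fin k)) (P : Finset (Finset (Fin c ⊕ Fin k)))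
    (x : {y // y ∈ T.filter (fun s => s.isRight = true)}) :
    Option ({y // y ∈ T.filter (fun s => s.isRight = true)} ×
      Finset {y // y ∈ T.filter (fun s => s.isLeft = true)}) :=
  (blockOf P ↑x).bind fun S =>
    (pick ((S.filter (fun s => s.isRight = true)).subtype
        (· ∈ T.filter (fun s => s.isRight = true)))).map
      fun x₀ => (x₀, (S.filter (fun s => s.isLeft = true)).subtype
        (· ∈ T.filter (fun s => s.isLeft = true)))

lemma phi_spec (hP : IsPseudo T P) {S : Finset (Fin c ⊕ Fin k)} (hS : S ∈ P) :
    ∃ x₀, pick ((S.filter (fun s => s.isRight = true)).subtype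
        (· ∈ T.filter (fun s => s.isRight = true))) = some x₀ ∧
      ∀ x, (phi T P x = some (x₀, (S.filter (fun s => s.isLeft = true)).subtype
        (· ∈ T.filter (fun s => s.isLeft = true))) ↔ ↑x ∈ S) := by
  obtain ⟨hsub, s, hsS, hsR⟩ := hP.1 S hS
  have hKne : ((S.filter (fun s => s.isRight = true)).subtype
      (· ∈ T.filter (fun s => s.isRight = true))).Nonempty := by
    refine ⟨⟨s, mem_filter.mpr ⟨hsub hsS, hsR⟩⟩, ?_⟩
    rw [mem_subtype]
    exact mem_filter.mpr ⟨hsS, hsR⟩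
  obtain ⟨x₀, hx₀K, hpK⟩ := pick_some hKne
  have hx₀S : (↑x₀ : Fin c ⊕ Fin k) ∈ S := by
    rw [mem_subtype] at hx₀K
    exact (mem_filter.mp hx₀K).1
  have hx₀R : (↑x₀ : Fin c ⊕ Fin k).isRight = true := (mem_filter.mp x₀.2).2
  refine ⟨x₀, hpK, fun x => ?_⟩
  constructor
  · intro hx
    rw [phi] at hx
    obtain ⟨S'', hb, hmap⟩ := Option.bind_eq_some_iff.mp hx
    obtain ⟨x₀'', hp'', heq⟩ := Option.map_eq_some_iff.mp hmap
    have hfst : x₀'' = x₀ := congrArg Prod.fst heq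
    subst hfst
    have hx₀S'' : (↑x₀'' : Fin c ⊕ Fin k) ∈ S'' := by
      have := pick_mem hp''
      rw [mem_subtype] at this
      exact (mem_filter.mp this).1
    obtain ⟨hS''P, hxS''⟩ := blockOf_mem hb
    have : S'' = S := block_unique hP hS''P hS hx₀R hx₀S'' hx₀S
    rwa [← this]
  · intro hxS
    have hxR : (↑x : Fin c ⊕ Fin k).isRight = true := (mem_filter.mp x.2).2
    rw [phi, blockOf_eq hP hS hxR hxS]
    rw [Option.bind_some, hpK, Option.map_some]

lemma phi_subset (hP : IsPseudo T P) (hP' : IsPseudo T P')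
    (h : phi T P = phi T P') : P ⊆ P' := by
  intro S hS
  obtain ⟨x₀, hpK, hiff⟩ := phi_spec hP hS
  have hx₀S : (↑x₀ : Fin c ⊕ Fin k) ∈ S := by
    have := pick_mem hpK
    rw [mem_subtype] at this
    exact (mem_filter.mp this).1
  have h1 := (hiff x₀).mpr hx₀S
  rw [h] at h1
  rw [phi] at h1
  obtain ⟨S₂, hb, hmap⟩ := Option.bind_eq_some_iff.mp h1
  have hS₂P' : S₂ ∈ P' := (blockOf_mem hb).1
  obtain ⟨x₀₂, hp₂, heq⟩ := Option.map_eq_some_iff.mp hmap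
  have hfst : x₀₂ = x₀ := congrArg Prod.fst heq
  subst hfst
  have hD : (S₂.filter (fun s => s.isLeft = true)).subtype
      (· ∈ T.filter (fun s => s.isLeft = true)) =
      (S.filter (fun s => s.isLeft = true)).subtype
      (· ∈ T.filter (fun s => s.isLeft = true)) := congrArg Prod.snd heq
  obtain ⟨x₀', hpK₂, hiff₂⟩ := phi_spec hP' hS₂P'
  have hx₀' : x₀' = x₀₂ := by
    rw [hpK₂] at hp₂
    exact Option.some.inj hp₂
  subst hx₀'
  -- right parts agree
  have hRf : S.filter (fun s => s.isRight = true) = S₂.filter (fun s => s.isRight = true) := by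
    ext a
    simp only [mem_filter]
    constructor
    · rintro ⟨haS, haR⟩
      have haT : a ∈ T.filter (fun s => s.isRight = true) :=
        mem_filter.mpr ⟨(hP.1 S hS).1 haS, haR⟩
      have h2 := (hiff ⟨a, haT⟩).mpr haS
      rw [h] at h2
      rw [← hD] at h2
      exact ⟨(hiff₂ ⟨a, haT⟩).mp h2, haR⟩
    · rintro ⟨haS₂, haR⟩
      have haT : a ∈ T.filter (fun s => s.isRight = true) :=
        mem_filter.mpr ⟨(hP'.1 S₂ hS₂P').1 haS₂, haR⟩
      have h2 := (hiff₂ ⟨a, haT⟩).mpr haS₂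
      rw [hD] at h2
      rw [← h] at h2
      exact ⟨(hiff ⟨a, haT⟩).mp h2, haR⟩
  -- left parts agree
  have hLf : S.filter (fun s => s.isLeft = true) = S₂.filter (fun s => s.isLeft = true) := by
    refine subtype_inj ?_ ?_ (hD.symm)
    · intro a ha
      rw [mem_filter] at ha
      exact mem_filter.mpr ⟨(hP.1 S hS).1 ha.1, ha.2⟩
    · intro a ha
      rw [mem_filter] at ha
      exact mem_filter.mpr ⟨(hP'.1 S₂ hS₂P').1 ha.1, ha.2⟩
  have : S = S₂ := by
    rw [← filter_decomp S, hRf, hLf, filter_decomp]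
  rwa [this]

lemma phi_injective :
    Function.Injective (fun Q : {P : Finset (Finset (Fin c ⊕ Fin k)) // IsPseudo T P} =>
      phi T Q.1) := by
  rintro ⟨P, hP⟩ ⟨P', hP'⟩ h
  simp only at h
  exact Subtype.ext (Finset.Subset.antisymm (phi_subset hP hP' h) (phi_subset hP' hP h.symm))


variable {l : ℕ}


noncomputable def blockEquiv (T : Finset (Fin c ⊕ Fin k)) (l : ℕ)
    (Q : {P : Finset (Finset (Fin c ⊕ Fin k)) // IsPseudo T P ∧ P.card = l}) :
    {S // S ∈ Q.1} ≃ Fin l :=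
  Fintype.equivFinOfCardEq (by rw [Fintype.card_coe]; exact Q.2.2)

noncomputable def eblk (T : Finset (Fin c ⊕ Fin k)) (l : ℕ)
    (q : {P : Finset (Finset (Fin c ⊕ Fin k)) // IsPseudo T P ∧ P.card = l} ×
      Equiv.Perm (Fin l)) (i : Fin l) : Finset (Fin c ⊕ Fin k) :=
  ↑((blockEquiv T l q.1).symm (q.2 i))

lemma eblk_mem (q : {P : Finset (Finset (Fin c ⊕ Fin k)) // IsPseudo T P ∧ P.card = l} ×
    Equiv.Perm (Fin l)) (i : Fin l) : eblk T l q i ∈ q.1.1 :=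
  ((blockEquiv T l q.1).symm (q.2 i)).2

lemma eblk_inj (q : {P : Finset (Finset (Fin c ⊕ Fin k)) // IsPseudo T P ∧ P.card = l} ×
    Equiv.Perm (Fin l)) {i j : Fin l} (h : eblk T l q i = eblk T l q j) : i = j := by
  have h2 := Subtype.coe_injective h
  exact q.2.injective ((blockEquiv T l q.1).symm.injective h2)

lemma eblk_surj (q : {P : Finset (Finset (Fin c ⊕ Fin k)) // IsPseudo T P ∧ P.card = l} ×
    Equiv.Perm (Fin l)) {S : Finset (Fin c ⊕ Fin k)} (hS : S ∈ q.1.1) :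
    ∃ i, eblk T l q i = S := by
  refine ⟨q.2.symm (blockEquiv T l q.1 ⟨S, hS⟩), ?_⟩
  rw [eblk]
  simp

noncomputable def psi (T : Finset (Fin c ⊕ Fin k)) (l : ℕ)
    (q : {P : Finset (Finset (Fin c ⊕ Fin k)) // IsPseudo T P ∧ P.card = l} ×
      Equiv.Perm (Fin l)) :
    (Fin l → Finset {y // y ∈ T.filter (fun s => s.isLeft = true)}) ×
      ({y // y ∈ T.filter (fun s => s.isRight = true)} → Fin (l + 1)) :=
  (fun i => ((eblk T l q i).filter (fun s => s.isLeft = true)).subtype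
      (· ∈ T.filter (fun s => s.isLeft = true)),
   fun x => ((pick (univ.filter (fun i : Fin l => ↑x ∈ eblk T l q i))).map Fin.succ).getD 0)

lemma psi_f_iff (q : {P : Finset (Finset (Fin c ⊕ Fin k)) // IsPseudo T P ∧ P.card = l} ×
    Equiv.Perm (Fin l)) (x : {y // y ∈ T.filter (fun s => s.isRight = true)}) (i : Fin l) :
    (psi T l q).2 x = i.succ ↔ ↑x ∈ eblk T l q i := by
  have hxR : (↑x : Fin c ⊕ Fin k).isRight = true := (mem_filter.mp x.2).2
  constructor
  · intro h
    simp only [psi] at h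
    cases hp : pick (univ.filter (fun j : Fin l => ↑x ∈ eblk T l q j)) with
    | none =>
        rw [hp] at h
        simp at h
        exact absurd h.symm (Fin.succ_ne_zero i)
    | some j =>
        rw [hp] at h
        simp only [Option.map_some, Option.getD_some] at h
        have hj : (↑x : Fin c ⊕ Fin k) ∈ eblk T l q j := (mem_filter.mp (pick_mem hp)).2
        have : j = i := Fin.succ_injective _ h
        rwa [← this]
  · intro hmem
    have hne : (univ.filter (fun j : Fin l => ↑x ∈ eblk T l q j)).Nonempty :=
      ⟨i, mem_filter.mpr ⟨mem_univ _, hmem⟩⟩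
    obtain ⟨j, hj, hpj⟩ := pick_some hne
    have hjm : (↑x : Fin c ⊕ Fin k) ∈ eblk T l q j := (mem_filter.mp hj).2
    have hji : j = i := eblk_inj q
      (block_unique q.1.2.1 (eblk_mem q j) (eblk_mem q i) hxR hjm hmem)
    simp only [psi, hpj, Option.map_some, Option.getD_some, hji]

lemma psi_injective : Function.Injective (psi T l) := by
  intro q q' h
  have hC := congrArg Prod.fst h
  have hf := congrArg Prod.snd h
  have he : ∀ i, eblk T l q i = eblk T l q' i := by
    intro i
    have hR : (eblk T l q i).filter (fun s => s.isRight = true) =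
        (eblk T l q' i).filter (fun s => s.isRight = true) := by
      ext a
      simp only [mem_filter]
      constructor
      · rintro ⟨ha, haR⟩
        have haT : a ∈ T.filter (fun s => s.isRight = true) :=
          mem_filter.mpr ⟨((q.1.2.1).1 _ (eblk_mem q i)).1 ha, haR⟩
        have h2 := (psi_f_iff q ⟨a, haT⟩ i).mpr ha
        rw [hf] at h2
        exact ⟨(psi_f_iff q' ⟨a, haT⟩ i).mp h2, haR⟩
      · rintro ⟨ha, haR⟩
        have haT : a ∈ T.filter (fun s => s.isRight = true) :=
          mem_filter.mpr ⟨((q'.1.2.1).1 _ (eblk_mem q' i)).1 ha, haR⟩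
        have h2 := (psi_f_iff q' ⟨a, haT⟩ i).mpr ha
        rw [← hf] at h2
        exact ⟨(psi_f_iff q ⟨a, haT⟩ i).mp h2, haR⟩
    have hL : (eblk T l q i).filter (fun s => s.isLeft = true) =
        (eblk T l q' i).filter (fun s => s.isLeft = true) := by
      refine subtype_inj ?_ ?_ (congrFun hC i)
      · intro a ha
        rw [mem_filter] at ha
        exact mem_filter.mpr ⟨((q.1.2.1).1 _ (eblk_mem q i)).1 ha.1, ha.2⟩
      · intro a ha
        rw [mem_filter] at ha
        exact mem_filter.mpr ⟨((q'.1.2.1).1 _ (eblk_mem q' i)).1 ha.1, ha.2⟩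
    rw [← filter_decomp (eblk T l q i), hR, hL, filter_decomp]
  have hPP : q.1.1 = q'.1.1 := by
    ext S
    constructor
    · intro hS
      obtain ⟨i, hi⟩ := eblk_surj q hS
      rw [← hi, he]
      exact eblk_mem q' i
    · intro hS
      obtain ⟨i, hi⟩ := eblk_surj q' hS
      rw [← hi, ← he]
      exact eblk_mem q i
  obtain ⟨⟨P, hP1⟩, σ⟩ := q
  obtain ⟨⟨P', hP1'⟩, σ'⟩ := q'
  simp only at hPP
  subst hPP
  have hσ : σ = σ' := by
    apply Equiv.ext
    intro i
    have h3 := he i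
    simp only [eblk] at h3
    have h4 := Subtype.coe_injective h3
    exact (blockEquiv T l ⟨P, hP1⟩).symm.injective h4
  subst hσ
  rfl

lemma part1 (c k : ℕ) (T : Finset (Fin c ⊕ Fin k)) :
    Nat.card {P : Finset (Finset (Fin c ⊕ Fin k)) // IsPseudo T P} ≤
      2 ^ ((T.filter (fun s => s.isRight = true)).card *
            (T.filter (fun s => s.isLeft = true)).card) *
        ((T.filter (fun s => s.isRight = true)).card + 1) ^
          (T.filter (fun s => s.isRight = true)).card := by
  classical
  set m := (T.filter (fun s => s.isRight = true)).card with hm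
  set n := (T.filter (fun s => s.isLeft = true)).card with hn
  have hle := Nat.card_le_card_of_injective _ (phi_injective (T := T))
  have hcard : Nat.card ({y // y ∈ T.filter (fun s => s.isRight = true)} →
      Option ({y // y ∈ T.filter (fun s => s.isRight = true)} ×
        Finset {y // y ∈ T.filter (fun s => s.isLeft = true)})) =
      (m * 2 ^ n + 1) ^ m := by
    rw [Nat.card_eq_fintype_card, Fintype.card_fun, Fintype.card_option, Fintype.card_prod,
      Fintype.card_coe, Fintype.card_finset, Fintype.card_coe]

  rw [hcard] at hle
  refine hle.trans ?_
  calc (m * 2 ^ n + 1) ^ m ≤ (2 ^ n * (m + 1)) ^ m := by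
        apply Nat.pow_le_pow_left
        have h1 : 1 ≤ 2 ^ n := Nat.one_le_two_pow
        nlinarith
    _ = 2 ^ (m * n) * (m + 1) ^ m := by
        rw [mul_pow, ← pow_mul, Nat.mul_comm n m]

lemma part2 (c k l : ℕ) (T : Finset (Fin c ⊕ Fin k)) :
    Nat.card {P : Finset (Finset (Fin c ⊕ Fin k)) // IsPseudo T P ∧ P.card = l} *
      Nat.factorial l ≤
    2 ^ (l * (T.filter (fun s => s.isLeft = true)).card) *
      (l + 1) ^ (T.filter (fun s => s.isRight = true)).card := by
  classical
  have hle := Nat.card_le_card_of_injective _ (psi_injective (c := c) (k := k) (l := l) (T := T))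
  rw [Nat.card_prod] at hle
  have h1 : Nat.card (Equiv.Perm (Fin l)) = Nat.factorial l := by
    rw [Nat.card_eq_fintype_card, Fintype.card_perm, Fintype.card_fin]
  have h2 : Nat.card ((Fin l → Finset {y // y ∈ T.filter (fun s => s.isLeft = true)}) ×
      ({y // y ∈ T.filter (fun s => s.isRight = true)} → Fin (l + 1))) =
      2 ^ (l * (T.filter (fun s => s.isLeft = true)).card) *
        (l + 1) ^ (T.filter (fun s => s.isRight = true)).card := by
    rw [Nat.card_eq_fintype_card, Fintype.card_prod, Fintype.card_fun, Fintype.card_fun,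
      Fintype.card_finset, Fintype.card_coe, Fintype.card_coe, Fintype.card_fin,
      Fintype.card_fin, ← pow_mul, Nat.mul_comm (T.filter (fun s => s.isLeft = true)).card l]
  rw [h1, h2] at hle
  exact hle


end PseudoAux

/-- Counting pseudosubpartitions of `T`:
(1) there are at most `2^{|T∩[k]||T∩[c]|}(|T∩[k]|+1)^{|T∩[k]|}` of them;
(2) at most `2^{l|T∩[c]|}(l+1)^{|T∩[k]|}/l!` with exactly `l` blocks. -/
theorem stmt12 (c k : ℕ) (hk : 0 < k) (T : Finset (Fin c ⊕ Fin k))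
    (hT : ∃ s ∈ T, s.isRight = true) :
    (Nat.card {P : Finset (Finset (Fin c ⊕ Fin k)) // IsPseudo T P} ≤
      2 ^ ((T.filter (fun s => s.isRight = true)).card *
            (T.filter (fun s => s.isLeft = true)).card) *
        ((T.filter (fun s => s.isRight = true)).card + 1) ^
          (T.filter (fun s => s.isRight = true)).card) ∧
    ∀ l : ℕ,
      ((Nat.card {P : Finset (Finset (Fin c ⊕ Fin k)) //
          IsPseudo T P ∧ P.card = l} : ℝ) ≤
        2 ^ (l * (T.filter (fun s => s.isLeft = true)).card) *
          ((l : ℝ) + 1) ^ (T.filter (fun s => s.isRight = true)).card /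
            (Nat.factorial l : ℝ)) := by
  refine ⟨PseudoAux.part1 c k T, fun l => ?_⟩
  have h := PseudoAux.part2 c k l T
  have hfac : (0 : ℝ) < (Nat.factorial l : ℝ) := by
    exact_mod_cast Nat.factorial_pos l
  rw [le_div_iff₀ hfac]
  calc (Nat.card {P : Finset (Finset (Fin c ⊕ Fin k)) //
          IsPseudo T P ∧ P.card = l} : ℝ) * (Nat.factorial l : ℝ)
      = ((Nat.card {P : Finset (Finset (Fin c ⊕ Fin k)) //
          IsPseudo T P ∧ P.card = l} * Nat.factorial l : ℕ) : ℝ) := by push_cast; ring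
    _ ≤ ((2 ^ (l * (T.filter (fun s => s.isLeft = true)).card) *
          (l + 1) ^ (T.filter (fun s => s.isRight = true)).card : ℕ) : ℝ) := by
        exact_mod_cast h
    _ = 2 ^ (l * (T.filter (fun s => s.isLeft = true)).card) *
          ((l : ℝ) + 1) ^ (T.filter (fun s => s.isRight = true)).card := by
        push_cast; ring
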